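/- Let (B, L) and (B', L') be complementary Hadamard pairs with scaling factor R, let Λ(L) and Λ(L') be the sets of integers representable in base R with digits in L and in L' respectively, and for a ∈ L ⊕ L' write a = p(a) + p'(a) for the unique p(a) ∈ L and p'(a) ∈ L'. Then Λ(L) ⊕ Λ(L') = ℤ if and only if for every list of digits a₀, …, a_{r−1} ∈ L ⊕ L' of an extreme cycle for (B ⊕ B', L ⊕ L'), the list p(a₀), …, p(a_{r−1}) is the digit list of an extreme cycle for (B, L) and the list p'(a₀), …, p'(a_{r−1}) is the digit list of an extreme cycle for (B', L'). -/

import Mathlib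

open scoped Pointwise
open Matrix

/-- `m_B(x) = (1/#B) ∑_{b ∈ B} e^{2πi b x}`. -/
noncomputable def mB (B : Finset ℤ) (x : ℝ) : ℂ :=
  (B.card : ℂ)⁻¹ * ∑ b ∈ B, Complex.exp (2 * (Real.pi : ℂ) * Complex.I * (b : ℂ) * (x : ℂ))

/-- The matrix `(1/√N)(e^{2πi b l / R})_{b ∈ B, l ∈ L}` associated with `(B, L)`. -/
noncomputable def hadamardMatrix (R : ℤ) (B L : Finset ℤ) : Matrix B L ℂ :=
  fun b l => ((1 / Real.sqrt B.card : ℝ) : ℂ) *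
    Complex.exp (2 * (Real.pi : ℂ) * Complex.I * ((b : ℤ) : ℂ) * ((l : ℤ) : ℂ) / ((R : ℤ) : ℂ))

/-- `(B, L)` is a Hadamard pair with scaling factor `R`. -/
def IsHadamardPair (R : ℤ) (B L : Finset ℤ) : Prop :=
  2 ≤ R ∧ (0 : ℤ) ∈ B ∧ (0 : ℤ) ∈ L ∧ B.card = L.card ∧
    hadamardMatrix R B L * (hadamardMatrix R B L)ᴴ = 1 ∧
    (hadamardMatrix R B L)ᴴ * hadamardMatrix R B L = 1

/-- `x₀, …, x_{r-1}` is a cycle for `L` (scaling factor `R`) with digits `l₀, …, l_{r-1}`. -/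
def IsCycle (R : ℤ) (L : Finset ℤ) {r : ℕ} (x : Fin r → ℝ) (l : Fin r → ℤ) : Prop :=
  0 < r ∧ ∀ k : Fin r, l k ∈ L ∧
    (x k + (l k : ℝ)) / (R : ℝ) = x ⟨(k.val + 1) % r, Nat.mod_lt _ k.pos⟩

/-- The cycle is extreme for `(B, L)`: `|m_B(x_k)| = 1` for all `k`. -/
def IsExtremeCycle (R : ℤ) (B L : Finset ℤ) {r : ℕ} (x : Fin r → ℝ) (l : Fin r → ℤ) : Prop :=
  IsCycle R L x l ∧ ∀ k : Fin r, ‖mB B (x k)‖ = 1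

/-- All extreme cycle points for `(B, L)` are integers. -/
def ExtremeCyclesIntegral (R : ℤ) (B L : Finset ℤ) : Prop :=
  ∀ (r : ℕ) (x : Fin r → ℝ) (l : Fin r → ℤ),
    IsExtremeCycle R B L x l → ∀ k : Fin r, ∃ n : ℤ, x k = (n : ℝ)

/-- `x` is representable in base `R` with digits in `L`. -/
def Representable (R : ℤ) (L : Finset ℤ) (x : ℤ) : Prop :=
  ∃ (X : ℕ → ℤ) (l : ℕ → ℤ), X 0 = x ∧ (∀ k, l k ∈ L) ∧ ∀ k, X k = R * X (k + 1) + l k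

/-- `y` has the base-`R` representation with digit sequence `d`. -/
def RepWith (R : ℤ) (y : ℤ) (d : ℕ → ℤ) : Prop :=
  ∃ X : ℕ → ℤ, X 0 = y ∧ ∀ k, X k = R * X (k + 1) + d k

/-- `L` is a complete set of representatives modulo `R`. -/
def IsCompleteResidues (R : ℤ) (L : Finset ℤ) : Prop :=
  ∀ x : ℤ, ∃! l, l ∈ L ∧ l ≡ x [ZMOD R]

/-- `A` and `A'` have disjoint differences: `(A - A) ∩ (A' - A') = {0}`. -/
def HasDisjointDiffs (A A' : Finset ℤ) : Prop :=
  (A - A) ∩ (A' - A') = ({0} : Finset ℤ)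

/-- `(B, L)` and `(B', L')` are complementary Hadamard pairs with scaling factor `R`. -/
def IsComplementaryPair (R : ℤ) (B L B' L' : Finset ℤ) : Prop :=
  IsHadamardPair R B L ∧ IsHadamardPair R B' L' ∧
    HasDisjointDiffs B B' ∧ HasDisjointDiffs L L' ∧
    IsCompleteResidues R (B + B') ∧ IsCompleteResidues R (L + L') ∧
    ExtremeCyclesIntegral R B L ∧ ExtremeCyclesIntegral R B' L' ∧
    (B + B').gcd id = 1

section Auxiliary

lemma STCP.abs_exp_unit (b : ℤ) (x : ℝ) :
    ‖Complex.exp (2 * (Real.pi : ℂ) * Complex.I * (b : ℂ) * (x : ℂ))‖ = 1 := by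
  have : 2 * (Real.pi : ℂ) * Complex.I * (b : ℂ) * (x : ℂ)
      = ((2 * Real.pi * b * x : ℝ) : ℂ) * Complex.I := by push_cast; ring
  rw [this, Complex.norm_exp_ofReal_mul_I]

lemma STCP.mB_int_abs (B : Finset ℤ) (hB : (0:ℤ) ∈ B) (n : ℤ) :
    ‖mB B ((n : ℤ) : ℝ)‖ = 1 := by
  have hcard : (0:ℕ) < B.card := Finset.card_pos.mpr ⟨0, hB⟩
  have hterm : ∀ b ∈ B, Complex.exp (2 * (Real.pi : ℂ) * Complex.I * (b : ℂ) * (((n:ℤ):ℝ) : ℂ)) = 1 := by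
    intro b _
    have : 2 * (Real.pi : ℂ) * Complex.I * (b : ℂ) * (((n:ℤ):ℝ) : ℂ)
        = ((b * n : ℤ) : ℂ) * (2 * (Real.pi:ℂ) * Complex.I) := by push_cast; ring
    rw [this, Complex.exp_int_mul_two_pi_mul_I]
  have : mB B ((n:ℤ):ℝ) = 1 := by
    rw [mB, Finset.sum_congr rfl hterm, Finset.sum_const, nsmul_eq_mul, mul_one]
    rw [inv_mul_cancel₀]
    exact_mod_cast hcard.ne'
  rw [this]; simp

lemma STCP.re_one_abs_one (z : ℂ) (hre : z.re = 1) (habs : ‖z‖ = 1) : z = 1 := by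
  have h2 : Complex.normSq z = 1 := by
    have := Complex.sq_norm z
    rw [habs] at this; simpa using this.symm
  have : z.im = 0 := by
    have := Complex.normSq_apply z
    rw [h2, hre] at this
    nlinarith [sq_nonneg z.im]
  exact Complex.ext (by simp [hre]) (by simp [this])

lemma STCP.exp_eq_one_of_abs_mB (B : Finset ℤ) (hB : (0:ℤ) ∈ B) (x : ℝ)
    (h : ‖mB B x‖ = 1) :
    ∀ b ∈ B, Complex.exp (2 * (Real.pi : ℂ) * Complex.I * (b : ℂ) * (x : ℂ)) = 1 := by
  set u : ℤ → ℂ := fun b => Complex.exp (2 * (Real.pi : ℂ) * Complex.I * (b : ℂ) * (x : ℂ)) with hu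
  set s : ℂ := ∑ b ∈ B, u b with hs
  have hcard : (0:ℕ) < B.card := Finset.card_pos.mpr ⟨0, hB⟩
  have hcC : ((B.card : ℕ) : ℂ) ≠ 0 := by exact_mod_cast hcard.ne'
  have habs_s : ‖s‖ = B.card := by
    have : ‖mB B x‖ = (‖(B.card:ℂ)‖)⁻¹ * ‖s‖ := by
      rw [mB, norm_mul, norm_inv]
    rw [h] at this
    have h2 : ‖((B.card:ℕ):ℂ)‖ = (B.card:ℝ) := by
      simp
    rw [h2] at this
    field_simp at this
    linarith [this]
  have hs0 : s ≠ 0 := by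
    intro h0; rw [h0] at habs_s; simp at habs_s; norm_cast at habs_s; omega
  set t : ℂ := (starRingEnd ℂ) s / (B.card : ℂ) with ht
  have hts : t * s = (B.card : ℂ) := by
    rw [ht]
    field_simp
    rw [mul_comm]
    rw [Complex.mul_conj]
    rw [← Complex.sq_norm, habs_s]
    push_cast; ring
  have htabs : ‖t‖ = 1 := by
    rw [ht, norm_div, Complex.norm_conj, habs_s]
    rw [show ‖((B.card:ℕ):ℂ)‖ = (B.card:ℝ) by simp]
    rw [div_self]
    exact_mod_cast hcard.ne'
  have hsum_re : ∑ b ∈ B, (t * u b).re = (B.card : ℝ) := by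
    have : t * s = ∑ b ∈ B, t * u b := by rw [hs, Finset.mul_sum]
    have h2 : (∑ b ∈ B, t * u b).re = ∑ b ∈ B, (t * u b).re := Complex.re_sum B _
    rw [← h2, ← this, hts]; simp
  have hle : ∀ b ∈ B, (t * u b).re ≤ 1 := by
    intro b hb
    calc (t * u b).re ≤ ‖t * u b‖ := Complex.re_le_norm _
      _ = 1 := by rw [norm_mul, htabs, hu]; simp [STCP.abs_exp_unit b x]
  have heq : ∀ b ∈ B, (t * u b).re = 1 := by
    have := (Finset.sum_eq_sum_iff_of_le hle).mp ?_
    · exact this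
    · rw [hsum_re]; simp
  have habs1 : ∀ b ∈ B, t * u b = 1 := by
    intro b hb
    refine STCP.re_one_abs_one _ (heq b hb) ?_
    rw [norm_mul, htabs, hu]; simp [STCP.abs_exp_unit b x]
  have ht1 : t = 1 := by
    have := habs1 0 hB
    have hu0 : u 0 = 1 := by rw [hu]; simp
    rw [hu0, mul_one] at this; exact this
  intro b hb
  have := habs1 b hb
  rw [ht1, one_mul] at this
  exact this

lemma STCP.intmul_of_exp_one (b : ℤ) (x : ℝ)
    (h : Complex.exp (2 * (Real.pi:ℂ) * Complex.I * (b:ℂ) * (x:ℂ)) = 1) :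
    ∃ m : ℤ, (b:ℝ) * x = m := by
  rw [Complex.exp_eq_one_iff] at h
  obtain ⟨m, hm⟩ := h
  refine ⟨m, ?_⟩
  have hne : (2 * (Real.pi:ℂ) * Complex.I) ≠ 0 := by
    simp [Real.pi_ne_zero, Complex.I_ne_zero]
  have h2 : (((b:ℝ) * x : ℝ) : ℂ) * (2 * (Real.pi:ℂ) * Complex.I)
      = (m : ℂ) * (2 * (Real.pi:ℂ) * Complex.I) := by
    rw [← hm]; push_cast; ring
  have h3 := mul_right_cancel₀ hne h2
  exact_mod_cast h3

lemma STCP.gcd_mul_int (s : Finset ℤ) (x : ℝ) (hs : ∀ c ∈ s, ∃ m : ℤ, (c:ℝ) * x = m) :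
    ∃ m : ℤ, ((s.gcd id : ℤ) : ℝ) * x = m := by
  classical
  induction s using Finset.induction_on with
  | empty => exact ⟨0, by simp⟩
  | @insert a s ha ih =>
    obtain ⟨m, hm⟩ := hs a (Finset.mem_insert_self a s)
    obtain ⟨m', hm'⟩ := ih (fun c hc => hs c (Finset.mem_insert_of_mem hc))
    rw [Finset.gcd_insert]
    set d := s.gcd id with hd
    have hgcd : (gcd (id a) d : ℤ) = a * (Int.gcdA a d) + d * (Int.gcdB a d) := by
      have : (gcd (id a) d : ℤ) = (Int.gcd a d : ℤ) := rfl
      rw [this, Int.gcd_eq_gcd_ab]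
    refine ⟨Int.gcdA a d * m + Int.gcdB a d * m', ?_⟩
    rw [hgcd]
    push_cast
    rw [← hm, ← hm']
    ring

lemma STCP.int_of_gcd_one (s : Finset ℤ) (x : ℝ) (h1 : s.gcd id = 1)
    (hs : ∀ c ∈ s, ∃ m : ℤ, (c:ℝ) * x = m) : ∃ n : ℤ, x = (n:ℝ) := by
  obtain ⟨m, hm⟩ := STCP.gcd_mul_int s x hs
  rw [h1] at hm
  exact ⟨m, by simpa using hm⟩

lemma STCP.diff_zero_aux (R : ℤ) (hR : 2 ≤ R) (D : ℕ → ℤ) (hD : ∀ k, D k = R * D (k + 1))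
    (M : ℤ) (hM : ∀ k, |D k| ≤ M) : D 0 = 0 := by
  have hpow : ∀ k, D 0 = R ^ k * D k := by
    intro k
    induction k with
    | zero => simp
    | succ k ih => rw [ih, hD k, pow_succ]; ring
  by_contra h0
  set k := (|D 0|).toNat with hk
  have hDk : D k ≠ 0 := by
    intro hz
    rw [hpow k, hz, mul_zero] at h0
    exact h0 rfl
  have h1 : (2:ℤ) ^ k ≤ R ^ k := pow_le_pow_left₀ (by norm_num) hR k
  have h2 : |D 0| = R ^ k * |D k| := by
    rw [hpow k, abs_mul, abs_of_nonneg (pow_nonneg (by omega) k)]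
  have h3 : (1:ℤ) ≤ |D k| := by
    have := abs_pos.mpr hDk; omega
  have h4 : (2:ℤ) ^ k ≤ |D 0| := by
    calc (2:ℤ)^k ≤ R^k := h1
      _ = R^k * 1 := by ring
      _ ≤ R^k * |D k| := by
          apply mul_le_mul_of_nonneg_left h3 (pow_nonneg (by omega) k)
      _ = |D 0| := h2.symm
  have h5 : (|D 0| : ℤ) < 2 ^ k := by
    have hk' : (k:ℤ) = |D 0| := by
      rw [hk]; exact Int.toNat_of_nonneg (abs_nonneg _)
    calc (|D 0| : ℤ) = k := hk'.symm
      _ < 2 ^ k := by exact_mod_cast Nat.lt_two_pow_self (n := k)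
  omega

lemma STCP.rep_bdd_aux (R : ℤ) (hR : 2 ≤ R) (C : Finset ℤ) (X d : ℕ → ℤ)
    (hd : ∀ k, d k ∈ C) (hX : ∀ k, X k = R * X (k + 1) + d k) :
    ∀ k, |X k| ≤ max (|X 0|) (∑ c ∈ C, |c|) := by
  intro k
  set M := ∑ c ∈ C, |c|
  have hdb : ∀ k, |d k| ≤ M := by
    intro k
    exact Finset.single_le_sum (f := fun c => |c|) (fun c _ => abs_nonneg c) (hd k)
  induction k with
  | zero => exact le_max_left _ _
  | succ k ih =>
    have h1 : R * X (k+1) = X k - d k := by linarith [hX k]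
    have h2 : |R * X (k+1)| ≤ max (|X 0|) M + M := by
      rw [h1]
      calc |X k - d k| ≤ |X k| + |d k| := abs_sub _ _
        _ ≤ max (|X 0|) M + M := add_le_add ih (hdb k)
    rw [abs_mul, abs_of_nonneg (by omega : (0:ℤ) ≤ R)] at h2
    have h3 : M ≤ max (|X 0|) M := le_max_right _ _
    nlinarith [abs_nonneg (X (k+1))]

lemma STCP.digit_unique (R : ℤ) (C : Finset ℤ) (hC : IsCompleteResidues R C)
    {c c' : ℤ} (hc : c ∈ C) (hc' : c' ∈ C) (h : c ≡ c' [ZMOD R]) : c = c' := by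
  obtain ⟨l, _, hu⟩ := hC c'
  rw [hu c ⟨hc, h⟩, hu c' ⟨hc', Int.ModEq.refl _⟩]

lemma STCP.rep_unique_aux (R : ℤ) (hR : R ≠ 0) (C : Finset ℤ) (hC : IsCompleteResidues R C)
    (X X' d d' : ℕ → ℤ) (hd : ∀ k, d k ∈ C) (hd' : ∀ k, d' k ∈ C)
    (hX : ∀ k, X k = R * X (k + 1) + d k) (hX' : ∀ k, X' k = R * X' (k + 1) + d' k)
    (h0 : X 0 = X' 0) : ∀ k, X k = X' k ∧ d k = d' k := by
  have key : ∀ k, X k = X' k → d k = d' k ∧ X (k+1) = X' (k+1) := by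
    intro k he
    have hdvd : R ∣ d' k - d k := by
      refine ⟨X (k+1) - X' (k+1), ?_⟩
      have h1 := hX k
      have h2 := hX' k
      rw [he] at h1
      linarith [h1, h2]
    have hmod : d k ≡ d' k [ZMOD R] := Int.modEq_iff_dvd.mpr hdvd
    have hdd : d k = d' k := STCP.digit_unique R C hC (hd k) (hd' k) hmod
    refine ⟨hdd, ?_⟩
    have h1 := hX k
    have h2 := hX' k
    rw [he, hdd] at h1
    have : R * X (k+1) = R * X' (k+1) := by linarith
    exact mul_left_cancel₀ hR this
  have main : ∀ k, X k = X' k := by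
    intro k
    induction k with
    | zero => exact h0
    | succ k ih => exact (key k ih).2
  exact fun k => ⟨main k, (key k (main k)).1⟩

lemma STCP.fin_congr {r : ℕ} {α : Type*} (f : Fin r → α) {i i' : ℕ} (hi : i < r) (hi' : i' < r)
    (h : i = i') : f ⟨i, hi⟩ = f ⟨i', hi'⟩ := by subst h; rfl

lemma STCP.mod_succ (j r : ℕ) : (j % r + 1) % r = (j + 1) % r := by
  conv_lhs => rw [Nat.add_mod]
  conv_rhs => rw [Nat.add_mod]
  rw [Nat.mod_mod_of_dvd j (dvd_refl r)]

end Auxiliary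

/-- For complementary Hadamard pairs `(B, L)` and `(B', L')`, with `p, p'`
the projections of `L ⊕ L'` onto `L` and `L'`, one has `Λ(L) ⊕ Λ(L') = ℤ` (every integer is
uniquely a sum `λ + λ'` with `λ ∈ Λ(L)`, `λ' ∈ Λ(L')`) if and only if for every digit list
`a₀, …, a_{r-1}` of an extreme cycle for `(B ⊕ B', L ⊕ L')`, the lists `p(a₀), …, p(a_{r-1})`
and `p'(a₀), …, p'(a_{r-1})` are digit lists of extreme cycles for `(B, L)` and `(B', L')`
respectively. -/
theorem spectra_tile_iff_cycles_project (R : ℤ) (B L B' L' : Finset ℤ)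
    (h : IsComplementaryPair R B L B' L') (p p' : ℤ → ℤ)
    (hp : ∀ a ∈ L + L', p a ∈ L ∧ p' a ∈ L' ∧ p a + p' a = a) :
    (∀ n : ℤ, ∃! q : ℤ × ℤ,
        Representable R L q.1 ∧ Representable R L' q.2 ∧ q.1 + q.2 = n) ↔
    (∀ (r : ℕ) (x : Fin r → ℝ) (a : Fin r → ℤ),
      IsExtremeCycle R (B + B') (L + L') x a →
      (∃ y : Fin r → ℝ, IsExtremeCycle R B L y (fun k => p (a k))) ∧
      (∃ y : Fin r → ℝ, IsExtremeCycle R B' L' y (fun k => p' (a k)))) := by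
  classical
  obtain ⟨hBL, hBL', hBB', hLL', hresB, hresL, hext, hext', hgcd⟩ := h
  obtain ⟨hR2, hB0, hL0, -, -, -⟩ := hBL
  obtain ⟨-, hB'0, hL'0, -, -, -⟩ := hBL'
  have hRne : R ≠ 0 := by omega
  have hRneR : (R:ℝ) ≠ 0 := by exact_mod_cast hRne
  have hBB'0 : (0:ℤ) ∈ B + B' := by simpa using Finset.add_mem_add hB0 hB'0
  -- digit function for L + L'
  have hdigE : ∀ x : ℤ, ∃ l, l ∈ L + L' ∧ l ≡ x [ZMOD R] := fun x => (hresL x).exists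
  choose dig hdigmem hdigmod using hdigE
  -- splitting uniqueness
  have hsplit : ∀ {u u' v v' : ℤ}, u ∈ L → u' ∈ L' → v ∈ L → v' ∈ L' →
      u + u' = v + v' → u = v ∧ u' = v' := by
    intro u u' v v' hu hu' hv hv' hsum
    have h1 : u - v ∈ (L - L) ∩ (L' - L') := by
      rw [Finset.mem_inter]
      refine ⟨Finset.sub_mem_sub hu hv, ?_⟩
      have hvu : u - v = v' - u' := by linarith
      rw [hvu]; exact Finset.sub_mem_sub hv' hu'
    rw [hLL'] at h1
    have h2 : u - v = 0 := Finset.mem_singleton.mp h1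
    omega
  -- unconditional uniqueness of decompositions
  have huniq : ∀ (n : ℤ) (q q' : ℤ × ℤ),
      (Representable R L q.1 ∧ Representable R L' q.2 ∧ q.1 + q.2 = n) →
      (Representable R L q'.1 ∧ Representable R L' q'.2 ∧ q'.1 + q'.2 = n) → q = q' := by
    rintro n ⟨q1, q2⟩ ⟨q1', q2'⟩ ⟨⟨Y, u, hY0, hum, hYr⟩, ⟨Z, v, hZ0, hvm, hZr⟩, hsum⟩
      ⟨⟨Y', u', hY0', hum', hYr'⟩, ⟨Z', v', hZ0', hvm', hZr'⟩, hsum'⟩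
    have hS : ∀ k, Y k + Z k = R * (Y (k+1) + Z (k+1)) + (u k + v k) := by
      intro k; have h1 := hYr k; have h2 := hZr k; linarith
    have hS' : ∀ k, Y' k + Z' k = R * (Y' (k+1) + Z' (k+1)) + (u' k + v' k) := by
      intro k; have h1 := hYr' k; have h2 := hZr' k; linarith
    have hmem : ∀ k, u k + v k ∈ L + L' := fun k => Finset.add_mem_add (hum k) (hvm k)
    have hmem' : ∀ k, u' k + v' k ∈ L + L' := fun k => Finset.add_mem_add (hum' k) (hvm' k)
    have h00 : Y 0 + Z 0 = Y' 0 + Z' 0 := by rw [hY0, hZ0, hY0', hZ0', hsum, hsum']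
    have hequ := STCP.rep_unique_aux R hRne (L+L') hresL (fun k => Y k + Z k)
      (fun k => Y' k + Z' k) (fun k => u k + v k) (fun k => u' k + v' k)
      hmem hmem' hS hS' h00
    have hdigeq : ∀ k, u k = u' k := by
      intro k
      exact (hsplit (hum k) (hvm k) (hum' k) (hvm' k) (hequ k).2).1
    have hD : ∀ k, (Y k - Y' k) = R * (Y (k+1) - Y' (k+1)) := by
      intro k
      have h1 := hYr k; have h2 := hYr' k; have h3 := hdigeq k
      linarith
    have hb1 := STCP.rep_bdd_aux R hR2 L Y u hum hYr
    have hb2 := STCP.rep_bdd_aux R hR2 L Y' u' hum' hYr'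
    have hMb : ∀ k, |Y k - Y' k| ≤ max (|Y 0|) (∑ c ∈ L, |c|) + max (|Y' 0|) (∑ c ∈ L, |c|) := by
      intro k
      calc |Y k - Y' k| ≤ |Y k| + |Y' k| := abs_sub _ _
        _ ≤ _ := add_le_add (hb1 k) (hb2 k)
    have hz := STCP.diff_zero_aux R hR2 (fun k => Y k - Y' k) hD _ hMb
    have hq1 : q1 = q1' := by omega
    have hq2 : q2 = q2' := by omega
    simp [Prod.ext_iff, hq1, hq2]
  constructor
  · -- LHS → RHS
    intro hLHS r x a hcyc
    obtain ⟨⟨hr, hcyc2⟩, hxt⟩ := hcyc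
    have hxint : ∀ k : Fin r, ∃ mm : ℤ, x k = (mm:ℝ) := by
      intro k
      have h1 := STCP.exp_eq_one_of_abs_mB (B+B') hBB'0 (x k) (hxt k)
      exact STCP.int_of_gcd_one (B+B') (x k) hgcd
        (fun c hc => STCP.intmul_of_exp_one c (x k) (h1 c hc))
    choose m hm using hxint
    have hmcyc : ∀ k : Fin r,
        m k + a k = m ⟨(k.val + 1) % r, Nat.mod_lt _ k.pos⟩ * R := by
      intro k
      have h1 := (hcyc2 k).2
      rw [hm k, hm ⟨(k.val + 1) % r, Nat.mod_lt _ k.pos⟩, div_eq_iff hRneR] at h1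
      exact_mod_cast h1
    set Xn : ℕ → ℤ := fun j => - m ⟨j % r, Nat.mod_lt _ hr⟩ with hXndef
    set an : ℕ → ℤ := fun j => a ⟨j % r, Nat.mod_lt _ hr⟩ with handef
    have hanmem : ∀ j, an j ∈ L + L' := by
      intro j; exact (hcyc2 _).1
    have hXnrec : ∀ j, Xn j = R * Xn (j+1) + an j := by
      intro j
      have h1 := hmcyc ⟨j % r, Nat.mod_lt _ hr⟩
      have h2 : m ⟨((⟨j % r, Nat.mod_lt _ hr⟩ : Fin r).val + 1) % r,
          Nat.mod_lt _ (⟨j % r, Nat.mod_lt _ hr⟩ : Fin r).pos⟩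
          = m ⟨(j+1) % r, Nat.mod_lt _ hr⟩ := by
        apply STCP.fin_congr
        show (j % r + 1) % r = (j + 1) % r
        exact STCP.mod_succ j r
      rw [h2] at h1
      simp only [hXndef, handef]
      linarith
    -- apply LHS at Xn 0
    obtain ⟨q, ⟨hq1, hq2, hqsum⟩, hqu⟩ := hLHS (Xn 0)
    obtain ⟨Y, u, hY0, hum, hYr⟩ := hq1
    obtain ⟨Z, v, hZ0, hvm, hZr⟩ := hq2
    have hS : ∀ k, Y k + Z k = R * (Y (k+1) + Z (k+1)) + (u k + v k) := by
      intro k; have h1 := hYr k; have h2 := hZr k; linarith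
    have hmem : ∀ k, u k + v k ∈ L + L' := fun k => Finset.add_mem_add (hum k) (hvm k)
    have h00 : Y 0 + Z 0 = Xn 0 := by rw [hY0, hZ0]; exact hqsum
    have hSX := STCP.rep_unique_aux R hRne (L+L') hresL (fun k => Y k + Z k) Xn
      (fun k => u k + v k) an hmem hanmem hS hXnrec h00
    have hu_p : ∀ j, u j = p (an j) ∧ v j = p' (an j) := by
      intro j
      obtain ⟨hpL, hpL', hpsum⟩ := hp (an j) (hanmem j)
      have hsx2 : u j + v j = an j := (hSX j).2
      exact hsplit (hum j) (hvm j) hpL hpL' (by rw [hsx2]; exact hpsum.symm)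
    -- shift invariance
    have hXnr0 : Xn r = Xn 0 := by
      simp only [hXndef]
      exact congrArg Neg.neg (STCP.fin_congr m (Nat.mod_lt _ hr) (Nat.mod_lt _ hr)
        (by rw [Nat.mod_self, Nat.zero_mod]))
    have hshift : (Y r, Z r) = q := by
      apply hqu
      refine ⟨⟨fun k => Y (r + k), fun k => u (r + k), by simp, fun k => hum _, ?_⟩,
        ⟨fun k => Z (r + k), fun k => v (r + k), by simp, fun k => hvm _, ?_⟩, ?_⟩
      · intro k
        exact hYr (r + k)
      · intro k
        exact hZr (r + k)
      · have hsr : Y r + Z r = Xn r := (hSX r).1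
        rw [hsr, hXnr0]
    have hstart : (Y 0, Z 0) = q := by
      rw [hY0, hZ0]
    have hYr0 : Y r = Y 0 := by
      have := hshift.trans hstart.symm
      exact (Prod.mk.injEq _ _ _ _).mp this |>.1
    have hZr0 : Z r = Z 0 := by
      have := hshift.trans hstart.symm
      exact (Prod.mk.injEq _ _ _ _).mp this |>.2
    have hanper : ∀ j, an (j + r) = an j := by
      intro j
      simp only [handef]
      apply STCP.fin_congr
      exact Nat.add_mod_right j r
    have hYper : ∀ j, Y (j + r) = Y j := by
      intro j
      induction j with
      | zero => simpa using hYr0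
      | succ j ih =>
        have h1 := hYr (j + r)
        have h2 := hYr j
        have h3 : u (j + r) = u j := by
          rw [(hu_p (j+r)).1, (hu_p j).1, hanper j]
        rw [ih, h3] at h1
        have h4 : R * Y (j + r + 1) = R * Y (j + 1) := by linarith
        have h5 := mul_left_cancel₀ hRne h4
        have harr : j + 1 + r = j + r + 1 := by omega
        rw [harr]; exact h5
    have hZper : ∀ j, Z (j + r) = Z j := by
      intro j
      induction j with
      | zero => simpa using hZr0
      | succ j ih =>
        have h1 := hZr (j + r)
        have h2 := hZr j
        have h3 : v (j + r) = v j := by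
          rw [(hu_p (j+r)).2, (hu_p j).2, hanper j]
        rw [ih, h3] at h1
        have h4 : R * Z (j + r + 1) = R * Z (j + 1) := by linarith
        have h5 := mul_left_cancel₀ hRne h4
        have harr : j + 1 + r = j + r + 1 := by omega
        rw [harr]; exact h5
    -- the two cycles
    have hYmodper : ∀ j, Y (j % r) = Y j := by
      intro j
      have haux : ∀ q t, Y (t + q * r) = Y t := by
        intro q
        induction q with
        | zero => intro t; simp
        | succ q ih =>
          intro t
          have harr : t + (q + 1) * r = (t + q * r) + r := by ring
          rw [harr, hYper, ih]
      have harr : j = j % r + (j / r) * r := by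
        rw [Nat.mod_add_div']
      conv_rhs => rw [harr]
      exact (haux (j / r) (j % r)).symm
    have hZmodper : ∀ j, Z (j % r) = Z j := by
      intro j
      have haux : ∀ q t, Z (t + q * r) = Z t := by
        intro q
        induction q with
        | zero => intro t; simp
        | succ q ih =>
          intro t
          have harr : t + (q + 1) * r = (t + q * r) + r := by ring
          rw [harr, hZper, ih]
      have harr : j = j % r + (j / r) * r := by
        rw [Nat.mod_add_div']
      conv_rhs => rw [harr]
      exact (haux (j / r) (j % r)).symm
    have hanval : ∀ k : Fin r, an k.val = a k := by
      intro k
      simp only [handef]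
      have : (⟨k.val % r, Nat.mod_lt _ hr⟩ : Fin r) = k := by
        apply Fin.ext
        simp [Nat.mod_eq_of_lt k.isLt]
      rw [this]
    constructor
    · refine ⟨fun k => ((- Y k.val : ℤ) : ℝ), ⟨hr, ?_⟩, ?_⟩
      · intro k
        refine ⟨(hp (a k) ((hcyc2 k).1)).1, ?_⟩
        rw [div_eq_iff hRneR]
        have hint : (- Y k.val : ℤ) + p (a k) = (- Y ((k.val + 1) % r)) * R := by
          have h1 := hYr k.val
          have h2 : u k.val = p (a k) := by rw [(hu_p k.val).1, hanval k]
          have h3 : Y ((k.val + 1) % r) = Y (k.val + 1) := hYmodper (k.val + 1)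
          rw [h3]
          linarith
        show ((- Y k.val : ℤ) : ℝ) + ((p (a k) : ℤ) : ℝ)
          = ((- Y ((k.val + 1) % r) : ℤ) : ℝ) * (R : ℝ)
        exact_mod_cast hint
      · intro k
        exact STCP.mB_int_abs B hB0 _
    · refine ⟨fun k => ((- Z k.val : ℤ) : ℝ), ⟨hr, ?_⟩, ?_⟩
      · intro k
        refine ⟨(hp (a k) ((hcyc2 k).1)).2.1, ?_⟩
        rw [div_eq_iff hRneR]
        have hint : (- Z k.val : ℤ) + p' (a k) = (- Z ((k.val + 1) % r)) * R := by
          have h1 := hZr k.val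
          have h2 : v k.val = p' (a k) := by rw [(hu_p k.val).2, hanval k]
          have h3 : Z ((k.val + 1) % r) = Z (k.val + 1) := hZmodper (k.val + 1)
          rw [h3]
          linarith
        show ((- Z k.val : ℤ) : ℝ) + ((p' (a k) : ℤ) : ℝ)
          = ((- Z ((k.val + 1) % r) : ℤ) : ℝ) * (R : ℝ)
        exact_mod_cast hint
      · intro k
        exact STCP.mB_int_abs B' hB'0 _
  · -- RHS → LHS
    intro hRHS n
    set stepf : ℤ → ℤ := fun t => (t - dig t) / R with hstepf
    have hstep : ∀ t, t = R * stepf t + dig t := by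
      intro t
      have hdvd : R ∣ t - dig t := Int.ModEq.dvd (hdigmod t)
      have h1 : R * ((t - dig t) / R) = t - dig t := Int.mul_ediv_cancel' hdvd
      simp only [hstepf]
      linarith
    set X : ℕ → ℤ := fun k => stepf^[k] n with hXdef
    have hXsucc : ∀ k, X (k+1) = stepf (X k) := by
      intro k
      simp only [hXdef]
      rw [Function.iterate_succ_apply']
    have hX0 : X 0 = n := rfl
    have hXrec : ∀ k, X k = R * X (k+1) + dig (X k) := by
      intro k
      rw [hXsucc k]
      exact hstep (X k)
    have hdmem : ∀ k, dig (X k) ∈ L + L' := fun k => hdigmem _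
    have hbdd := STCP.rep_bdd_aux R hR2 (L+L') X (fun k => dig (X k)) hdmem hXrec
    set M0 := max (|X 0|) (∑ c ∈ L + L', |c|) with hM0def
    have hmaps : ∀ k ∈ Finset.range ((Finset.Icc (-M0) M0).card + 1),
        X k ∈ Finset.Icc (-M0) M0 := by
      intro k _
      rw [Finset.mem_Icc]
      have h1 := abs_le.mp (hbdd k)
      exact h1
    obtain ⟨i, hi, j, hj, hij, hXij⟩ :=
      Finset.exists_ne_map_eq_of_card_lt_of_maps_to (by simp) hmaps
    obtain ⟨K, r, hr, hKr⟩ : ∃ K rr, 0 < rr ∧ X (K + rr) = X K := by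
      rcases Nat.lt_or_ge i j with hlt | hge
      · exact ⟨i, j - i, by omega, by rw [show i + (j - i) = j by omega]; exact hXij.symm⟩
      · have hlt : j < i := by omega
        exact ⟨j, i - j, by omega, by rw [show j + (i - j) = i by omega]; exact hXij⟩
    have hXper : ∀ t, X (K + t + r) = X (K + t) := by
      intro t
      have h1 : X (K + t) = stepf^[t] (X K) := by
        simp only [hXdef]
        rw [show K + t = t + K by omega, Function.iterate_add_apply]
      have h2 : X (K + t + r) = stepf^[t] (X (K + r)) := by
        simp only [hXdef]
        rw [show K + t + r = t + (K + r) by omega, Function.iterate_add_apply]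
      rw [h2, hKr, ← h1]
    have hXmodaux : ∀ q t, X (K + t + q * r) = X (K + t) := by
      intro q
      induction q with
      | zero => intro t; simp
      | succ q ih =>
        intro t
        have harr : K + t + (q + 1) * r = K + (t + q * r) + r := by ring
        rw [harr, hXper (t + q * r)]
        have harr2 : K + (t + q * r) = K + t + q * r := by ring
        rw [harr2, ih]
    have hXmod : ∀ t, X (K + t) = X (K + t % r) := by
      intro t
      have harr : K + t = K + t % r + (t / r) * r := by
        rw [Nat.add_assoc, Nat.mod_add_div']
      conv_lhs => rw [harr]
      exact hXmodaux (t / r) (t % r)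
    -- the extreme cycle
    have hcycle : IsExtremeCycle R (B+B') (L+L')
        (fun k : Fin r => ((- X (K + k.val) : ℤ) : ℝ))
        (fun k : Fin r => dig (X (K + k.val))) := by
      refine ⟨⟨hr, ?_⟩, ?_⟩
      · intro k
        refine ⟨hdigmem _, ?_⟩
        rw [div_eq_iff hRneR]
        have hXeq : X (K + (k.val + 1) % r) = X (K + k.val + 1) := by
          rw [← hXmod (k.val + 1)]
          rfl
        have hint : (- X (K + k.val) : ℤ) + dig (X (K + k.val))
            = (- X (K + (k.val + 1) % r)) * R := by
          rw [hXeq]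
          have h1 := hXrec (K + k.val)
          linarith
        show ((- X (K + k.val) : ℤ) : ℝ) + ((dig (X (K + k.val)) : ℤ) : ℝ)
          = ((- X (K + (k.val + 1) % r) : ℤ) : ℝ) * (R : ℝ)
        exact_mod_cast hint
      · intro k
        exact STCP.mB_int_abs (B + B') hBB'0 _
    obtain ⟨⟨y, hy⟩, ⟨y', hy'⟩⟩ := hRHS r _ _ hcycle
    have hzint := hext r y _ hy
    choose z hz using hzint
    have hz'int := hext' r y' _ hy'
    choose z' hz' using hz'int
    have hzcyc : ∀ k : Fin r,
        z k + p (dig (X (K + k.val))) = z ⟨(k.val + 1) % r, Nat.mod_lt _ k.pos⟩ * R := by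
      intro k
      have h1 := (hy.1.2 k).2
      rw [hz k, hz ⟨(k.val + 1) % r, Nat.mod_lt _ k.pos⟩, div_eq_iff hRneR] at h1
      exact_mod_cast h1
    have hz'cyc : ∀ k : Fin r,
        z' k + p' (dig (X (K + k.val))) = z' ⟨(k.val + 1) % r, Nat.mod_lt _ k.pos⟩ * R := by
      intro k
      have h1 := (hy'.1.2 k).2
      rw [hz' k, hz' ⟨(k.val + 1) % r, Nat.mod_lt _ k.pos⟩, div_eq_iff hRneR] at h1
      exact_mod_cast h1
    -- matching
    set e : ℕ → ℤ := fun j => z ⟨j % r, Nat.mod_lt _ hr⟩ + z' ⟨j % r, Nat.mod_lt _ hr⟩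
      + X (K + j % r) with hedef
    have herec : ∀ j, e j = R * e (j+1) := by
      intro j
      have h1 := hzcyc ⟨j % r, Nat.mod_lt _ hr⟩
      have h2 := hz'cyc ⟨j % r, Nat.mod_lt _ hr⟩
      have hfz : z ⟨((⟨j % r, Nat.mod_lt _ hr⟩ : Fin r).val + 1) % r,
          Nat.mod_lt _ (⟨j % r, Nat.mod_lt _ hr⟩ : Fin r).pos⟩ = z ⟨(j + 1) % r, Nat.mod_lt _ hr⟩ := by
        apply STCP.fin_congr
        show (j % r + 1) % r = (j + 1) % r
        exact STCP.mod_succ j r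
      have hfz' : z' ⟨((⟨j % r, Nat.mod_lt _ hr⟩ : Fin r).val + 1) % r,
          Nat.mod_lt _ (⟨j % r, Nat.mod_lt _ hr⟩ : Fin r).pos⟩ = z' ⟨(j + 1) % r, Nat.mod_lt _ hr⟩ := by
        apply STCP.fin_congr
        show (j % r + 1) % r = (j + 1) % r
        exact STCP.mod_succ j r
      rw [hfz] at h1
      rw [hfz'] at h2
      have h3 : X (K + j % r) = R * X (K + (j + 1) % r) + dig (X (K + j % r)) := by
        have h4 := hXrec (K + j % r)
        have h5 : X (K + j % r + 1) = X (K + (j + 1) % r) := by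
          rw [show K + j % r + 1 = K + (j % r + 1) from rfl, hXmod (j % r + 1),
            STCP.mod_succ j r]
        rw [h5] at h4
        exact h4
      obtain ⟨hppL, hppL', hppsum⟩ := hp (dig (X (K + j % r))) (hdigmem _)
      simp only [hedef]
      linarith
    have hebdd : ∀ j, |e j| ≤ ∑ i ∈ Finset.range r, |e i| := by
      intro j
      have h1 : e j = e (j % r) := by
        have h2 : j % r % r = j % r := Nat.mod_mod_of_dvd j (dvd_refl r)
        simp only [hedef, h2]
      rw [h1]
      exact Finset.single_le_sum (f := fun i => |e i|) (fun i _ => abs_nonneg _)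
        (Finset.mem_range.mpr (Nat.mod_lt _ hr))
    have hez : ∀ j, e j = 0 := by
      intro j
      have hD2 : ∀ k, e (j + k) = R * e (j + (k + 1)) := fun k => herec (j + k)
      have := STCP.diff_zero_aux R hR2 (fun k => e (j + k)) hD2 _ (fun k => hebdd (j + k))
      simpa using this
    have hmatch : ∀ k : Fin r, z k + z' k = - X (K + k.val) := by
      intro k
      have h1 := hez k.val
      simp only [hedef] at h1
      have h2 : (⟨k.val % r, Nat.mod_lt _ hr⟩ : Fin r) = k := by
        apply Fin.ext; simp [Nat.mod_eq_of_lt k.isLt]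
      rw [h2] at h1
      have h3 : K + k.val % r = K + k.val := by
        rw [Nat.mod_eq_of_lt k.isLt]
      rw [h3] at h1
      linarith
    -- build the representation sequences
    set Zn : ℕ → ℤ := fun j => z ⟨j % r, Nat.mod_lt _ hr⟩ with hZndef
    set Zn' : ℕ → ℤ := fun j => z' ⟨j % r, Nat.mod_lt _ hr⟩ with hZn'def
    set lY : ℕ → ℤ := fun k => p (dig (X k)) with hlYdef
    set lY' : ℕ → ℤ := fun k => p' (dig (X k)) with hlY'def
    have hZnrec : ∀ j, - Zn j = R * (- Zn (j+1)) + lY (K + j) := by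
      intro j
      have h1 := hzcyc ⟨j % r, Nat.mod_lt _ hr⟩
      have hfz : z ⟨((⟨j % r, Nat.mod_lt _ hr⟩ : Fin r).val + 1) % r,
          Nat.mod_lt _ (⟨j % r, Nat.mod_lt _ hr⟩ : Fin r).pos⟩ = z ⟨(j + 1) % r, Nat.mod_lt _ hr⟩ := by
        apply STCP.fin_congr
        show (j % r + 1) % r = (j + 1) % r
        exact STCP.mod_succ j r
      rw [hfz] at h1
      have h2 : X (K + j % r) = X (K + j) := (hXmod j).symm
      simp only [hZndef, hlYdef]
      rw [← h2]
      linarith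
    have hZn'rec : ∀ j, - Zn' j = R * (- Zn' (j+1)) + lY' (K + j) := by
      intro j
      have h1 := hz'cyc ⟨j % r, Nat.mod_lt _ hr⟩
      have hfz : z' ⟨((⟨j % r, Nat.mod_lt _ hr⟩ : Fin r).val + 1) % r,
          Nat.mod_lt _ (⟨j % r, Nat.mod_lt _ hr⟩ : Fin r).pos⟩ = z' ⟨(j + 1) % r, Nat.mod_lt _ hr⟩ := by
        apply STCP.fin_congr
        show (j % r + 1) % r = (j + 1) % r
        exact STCP.mod_succ j r
      rw [hfz] at h1
      have h2 : X (K + j % r) = X (K + j) := (hXmod j).symm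
      simp only [hZn'def, hlY'def]
      rw [← h2]
      linarith
    set W : ℕ → ℤ := fun i => Nat.rec (motive := fun _ => ℤ) (- Zn 0)
      (fun i w => R * w + lY (K - i - 1)) i with hWdef
    set W' : ℕ → ℤ := fun i => Nat.rec (motive := fun _ => ℤ) (- Zn' 0)
      (fun i w => R * w + lY' (K - i - 1)) i with hW'def
    have hW0 : W 0 = - Zn 0 := rfl
    have hWs : ∀ i, W (i+1) = R * W i + lY (K - i - 1) := fun i => rfl
    have hW'0 : W' 0 = - Zn' 0 := rfl
    have hW's : ∀ i, W' (i+1) = R * W' i + lY' (K - i - 1) := fun i => rfl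
    set Y : ℕ → ℤ := fun k => if K ≤ k then - Zn (k - K) else W (K - k) with hYdef
    set Y' : ℕ → ℤ := fun k => if K ≤ k then - Zn' (k - K) else W' (K - k) with hY'def
    have hYrec : ∀ k, Y k = R * Y (k+1) + lY k := by
      intro k
      rcases Nat.lt_or_ge k K with hk | hk
      · have hk1 : Y k = W (K - k) := by simp only [hYdef]; rw [if_neg (by omega)]
        obtain ⟨i, hi⟩ : ∃ i, K - k = i + 1 := ⟨K - k - 1, by omega⟩
        rcases Nat.lt_or_ge (k+1) K with hk2 | hk2
        · have hk3 : Y (k+1) = W (K - (k+1)) := by simp only [hYdef]; rw [if_neg (by omega)]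
          rw [hk1, hi, hWs i, hk3, show K - (k+1) = i by omega, show K - i - 1 = k by omega]
        · have hkK : K = k + 1 := by omega
          have hk3 : Y (k+1) = - Zn 0 := by
            simp only [hYdef]; rw [if_pos (by omega), show k + 1 - K = 0 by omega]
          rw [hk1, hi, hWs i, hk3, ← hW0, show K - i - 1 = k by omega,
            show i = 0 by omega]
      · have h1 : Y k = - Zn (k - K) := by simp only [hYdef]; rw [if_pos hk]
        have h2 : Y (k+1) = - Zn (k - K + 1) := by
          simp only [hYdef]; rw [if_pos (by omega), show k + 1 - K = k - K + 1 by omega]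
        rw [h1, h2]
        have := hZnrec (k - K)
        rw [show K + (k - K) = k by omega] at this
        exact this
    have hY'rec : ∀ k, Y' k = R * Y' (k+1) + lY' k := by
      intro k
      rcases Nat.lt_or_ge k K with hk | hk
      · have hk1 : Y' k = W' (K - k) := by simp only [hY'def]; rw [if_neg (by omega)]
        obtain ⟨i, hi⟩ : ∃ i, K - k = i + 1 := ⟨K - k - 1, by omega⟩
        rcases Nat.lt_or_ge (k+1) K with hk2 | hk2
        · have hk3 : Y' (k+1) = W' (K - (k+1)) := by simp only [hY'def]; rw [if_neg (by omega)]
          rw [hk1, hi, hW's i, hk3, show K - (k+1) = i by omega, show K - i - 1 = k by omega]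
        · have hkK : K = k + 1 := by omega
          have hk3 : Y' (k+1) = - Zn' 0 := by
            simp only [hY'def]; rw [if_pos (by omega), show k + 1 - K = 0 by omega]
          rw [hk1, hi, hW's i, hk3, ← hW'0, show K - i - 1 = k by omega,
            show i = 0 by omega]
      · have h1 : Y' k = - Zn' (k - K) := by simp only [hY'def]; rw [if_pos hk]
        have h2 : Y' (k+1) = - Zn' (k - K + 1) := by
          simp only [hY'def]; rw [if_pos (by omega), show k + 1 - K = k - K + 1 by omega]
        rw [h1, h2]
        have := hZn'rec (k - K)
        rw [show K + (k - K) = k by omega] at this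
        exact this
    have hYrep : Representable R L (Y 0) :=
      ⟨Y, lY, rfl, fun k => (hp _ (hdigmem _)).1, hYrec⟩
    have hY'rep : Representable R L' (Y' 0) :=
      ⟨Y', lY', rfl, fun k => (hp _ (hdigmem _)).2.1, hY'rec⟩
    have hsumK : Y K + Y' K = X K := by
      have h1 : Y K = - Zn 0 := by
        simp only [hYdef]; rw [if_pos le_rfl, Nat.sub_self]
      have h2 : Y' K = - Zn' 0 := by
        simp only [hY'def]; rw [if_pos le_rfl, Nat.sub_self]
      have h3 := hmatch ⟨0, hr⟩
      simp only at h3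
      have h4 : Zn 0 = z ⟨0, hr⟩ := by
        simp only [hZndef]
        apply STCP.fin_congr
        exact Nat.zero_mod r
      have h5 : Zn' 0 = z' ⟨0, hr⟩ := by
        simp only [hZn'def]
        apply STCP.fin_congr
        exact Nat.zero_mod r
      rw [h1, h2, h4, h5]
      rw [show K + (⟨0, hr⟩ : Fin r).val = K by simp] at h3
      linarith
    have hdown : ∀ i, i ≤ K → Y (K - i) + Y' (K - i) = X (K - i) := by
      intro i
      induction i with
      | zero => intro _; simpa using hsumK
      | succ i ih =>
        intro hiK
        have hih := ih (by omega)
        have h1 := hYrec (K - (i+1))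
        have h2 := hY'rec (K - (i+1))
        have h3 := hXrec (K - (i+1))
        have h4 : p (dig (X (K - (i+1)))) + p' (dig (X (K - (i+1)))) = dig (X (K - (i+1))) :=
          (hp _ (hdigmem _)).2.2
        have hk1 : K - (i+1) + 1 = K - i := by omega
        rw [hk1] at h1 h2 h3
        simp only [hlYdef] at h1
        simp only [hlY'def] at h2
        have h5 : R * (Y (K - i) + Y' (K - i)) = R * X (K - i) := by rw [hih]
        linarith
    have hfinal : Y 0 + Y' 0 = n := by
      have := hdown K le_rfl
      rw [Nat.sub_self] at this
      rw [this, hX0]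
    exact ⟨(Y 0, Y' 0), ⟨hYrep, hY'rep, hfinal⟩,
      fun q' hq' => huniq n q' (Y 0, Y' 0) hq' ⟨hYrep, hY'rep, hfinal⟩⟩
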